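/- Let G be a DAG over O ∪ L ∪ S ∪ M where no vertex of M is an ancestor of any vertex in O ∪ S or of any other vertex of M. Fix S_l ⊆ S ∪ M. Define an oracle-wrapper relation I(O_i, O_j, W) that holds iff both O_i ⊥_d O_j | W ∪ S_t(O_i,O_j,W) and O_i ⊥_d O_j | W ∪ S_l, where S_t(O_i,O_j,W) ⊆ S_l is any assignment with S_l \ S_t(O_i,O_j,W) ⊆ M. Then for all O_i, O_j, W: I(O_i, O_j, W) holds iff O_i ⊥_d O_j | W ∪ S_l. -/

import Mathlib

variable {V : Type*}

/-- `Ancestor E x y`: there is a (possibly trivial) directed path from `x` to `y`. -/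
def Ancestor (E : V → V → Prop) (x y : V) : Prop :=
  Relation.ReflTransGen E x y

/-- A directed graph is acyclic (a DAG) if it has no directed cycles. -/
def Acyclic (E : V → V → Prop) : Prop :=
  ∀ v : V, ¬ Relation.TransGen E v v

/-- `v` is a collider on the path (vertex list) `l`. -/
def ColliderOn (E : V → V → Prop) (l : List V) (v : V) : Prop :=
  ∃ x y : V, [x, v, y] <:+: l ∧ E x v ∧ E y v

/-- `v` is an interior non-collider on the path `l`. -/
def NonColliderOn (E : V → V → Prop) (l : List V) (v : V) : Prop :=
  (∃ x y : V, [x, v, y] <:+: l) ∧ ¬ ColliderOn E l v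

/-- `l` is a path between `a` and `b` that is active given the conditioning set `C`:
every collider on `l` has a descendant in `C` and no non-collider on `l` is in `C`. -/
def ActivePath (E : V → V → Prop) (C : Set V) (a b : V) (l : List V) : Prop :=
  l.head? = some a ∧ l.getLast? = some b ∧ l.Nodup ∧
  l.Chain' (fun u v => E u v ∨ E v u) ∧
  (∀ v, ColliderOn E l v → ∃ d ∈ C, Ancestor E v d) ∧
  (∀ v, NonColliderOn E l v → v ∉ C)

/-- `a` and `b` are d-connected given `C`. -/
def DConn (E : V → V → Prop) (C : Set V) (a b : V) : Prop :=
  ∃ l : List V, ActivePath E C a b l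

/-- `a` and `b` are d-separated given `C`. -/
def DSep (E : V → V → Prop) (C : Set V) (a b : V) : Prop :=
  ¬ DConn E C a b

/-- Walking forward along a directed edge on the path, we eventually reach either
a collider (hence an ancestor of something in `C`) or the last vertex. -/
lemma reach_aux {E : V → V → Prop} {C : Set V} {l : List V}
    (hchain : l.Chain' (fun u v => E u v ∨ E v u))
    (hcoll : ∀ w, ColliderOn E l w → ∃ d ∈ C, Ancestor E w d) :
    ∀ (suf pre : List V) (v y : V), l = pre ++ v :: y :: suf → E v y →
      ∃ d, Ancestor E v d ∧ (d ∈ C ∨ l.getLast? = some d) := by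
  intro suf
  induction suf with
  | nil =>
    intro pre v y hl hvy
    refine ⟨y, Relation.ReflTransGen.single hvy, Or.inr ?_⟩
    rw [hl]
    rw [show pre ++ [v, y] = (pre ++ [v]) ++ [y] by simp]
    simp
  | cons z suf ih =>
    intro pre v y hl hvy
    have hyz : E y z ∨ E z y := by
      have : [y, z].Chain' (fun u v => E u v ∨ E v u) :=
        hchain.infix ⟨pre ++ [v], suf, by simp [hl]⟩
      simpa [List.Chain'] using this
    rcases hyz with h | h
    · obtain ⟨d, hd, hmem⟩ := ih (pre ++ [v]) y z (by simp [hl]) h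
      exact ⟨d, Relation.ReflTransGen.head hvy hd, hmem⟩
    · obtain ⟨d, hdC, hyd⟩ := hcoll y ⟨v, z, ⟨pre, suf, by simp [hl]⟩, hvy, h⟩
      exact ⟨d, Relation.ReflTransGen.head hvy hyd, Or.inl hdC⟩

/-- Any interior non-collider on an active path has a descendant in `C` or
among the endpoints. -/
lemma noncollider_reach {E : V → V → Prop} {C : Set V} {a b : V} {l : List V}
    (hl : ActivePath E C a b l) {v : V} (hv : NonColliderOn E l v) :
    ∃ d, Ancestor E v d ∧ (d ∈ C ∨ d = a ∨ d = b) := by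
  obtain ⟨h1, h2, _h3, h4, h5, _h6⟩ := hl
  obtain ⟨⟨x, y, hinf⟩, hnc⟩ := hv
  obtain ⟨s, t, hst⟩ := hinf
  have hxv : E x v ∨ E v x := by
    have : [x, v].Chain' (fun u v => E u v ∨ E v u) :=
      h4.infix ⟨s, y :: t, by rw [← hst]; simp⟩
    simpa [List.Chain'] using this
  have hvy : E v y ∨ E y v := by
    have : [v, y].Chain' (fun u v => E u v ∨ E v u) :=
      h4.infix ⟨s ++ [x], t, by rw [← hst]; simp⟩
    simpa [List.Chain'] using this
  have hdir : E v y ∨ E v x := by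
    rcases hxv with h | h
    · rcases hvy with h' | h'
      · exact Or.inl h'
      · exact absurd ⟨x, y, ⟨s, t, hst⟩, h, h'⟩ hnc
    · exact Or.inr h
  rcases hdir with h | h
  · obtain ⟨d, hd, hmem⟩ :=
      reach_aux h4 h5 t (s ++ [x]) v y (by rw [← hst]; simp) h
    refine ⟨d, hd, ?_⟩
    rcases hmem with hc | hlast
    · exact Or.inl hc
    · rw [h2] at hlast
      exact Or.inr (Or.inr (Option.some.inj hlast).symm)
  · -- go along the reversed path
    have hchain' : l.reverse.Chain' (fun u v => E u v ∨ E v u) := by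
      rw [List.Chain', List.isChain_reverse]
      exact h4.imp (fun _ _ h => h.symm)
    have hcoll' : ∀ w, ColliderOn E l.reverse w → ∃ d ∈ C, Ancestor E w d := by
      rintro w ⟨a', b', hinf', ha', hb'⟩
      have : [b', w, a'] <:+: l := by
        rw [← List.reverse_infix]
        simpa using hinf'
      exact h5 w ⟨b', a', this, hb', ha'⟩
    have hinfr : l.reverse = (t.reverse ++ [y]) ++ v :: x :: s.reverse := by
      rw [← hst]; simp
    obtain ⟨d, hd, hmem⟩ :=
      reach_aux hchain' hcoll' s.reverse (t.reverse ++ [y]) v x hinfr h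
    refine ⟨d, hd, ?_⟩
    rcases hmem with hc | hlast
    · exact Or.inl hc
    · rw [List.getLast?_reverse, h1] at hlast
      exact Or.inr (Or.inl (Option.some.inj hlast).symm)

/-- Soundness of the test-wise deletion CI-oracle wrapper: the wrapper relation
(d-separation given both `W ∪ S_t(O_i,O_j,W)` and `W ∪ S_l`) holds iff
`O_i ⊥_d O_j | W ∪ S_l`. -/
theorem stmt_11 (E : V → V → Prop) (hacyc : Acyclic E) (O L S M : Set V)
    (hM : ∀ m ∈ M, ∀ x : V, Ancestor E m x → x ∉ O ∪ S ∧ (x ∈ M → x = m))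
    (Sl : Set V) (hSl : Sl ⊆ S ∪ M)
    (St : V → V → Set V → Set V)
    (hSt : ∀ i j : V, ∀ W : Set V, St i j W ⊆ Sl ∧ Sl \ St i j W ⊆ M) :
    ∀ Oi ∈ O, ∀ Oj ∈ O, ∀ W : Set V, W ⊆ O \ {Oi, Oj} →
      ((DSep E (W ∪ St Oi Oj W) Oi Oj ∧ DSep E (W ∪ Sl) Oi Oj) ↔
        DSep E (W ∪ Sl) Oi Oj) := by
  intro Oi hOi Oj hOj W hW
  constructor
  · exact fun h => h.2
  · intro h
    refine ⟨?_, h⟩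
    rintro ⟨l, hl⟩
    apply h
    refine ⟨l, ?_⟩
    obtain ⟨h1, h2, h3, h4, h5, h6⟩ := hl
    refine ⟨h1, h2, h3, h4, ?_, ?_⟩
    · intro v hv
      obtain ⟨d, hd, ha⟩ := h5 v hv
      refine ⟨d, ?_, ha⟩
      rcases hd with hd | hd
      · exact Or.inl hd
      · exact Or.inr ((hSt Oi Oj W).1 hd)
    · intro v hv hvC'
      have hvC := h6 v hv
      rcases hvC' with hw | hsl
      · exact hvC (Or.inl hw)
      by_cases hst : v ∈ St Oi Oj W
      · exact hvC (Or.inr hst)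
      have hvM : v ∈ M := (hSt Oi Oj W).2 ⟨hsl, hst⟩
      obtain ⟨d, hvd, hcase⟩ := noncollider_reach ⟨h1, h2, h3, h4, h5, h6⟩ hv
      have hMd := hM v hvM d hvd
      rcases hcase with (hdW | hdSt) | hda | hdb
      · exact hMd.1 (Or.inl (hW hdW).1)
      · rcases hSl ((hSt Oi Oj W).1 hdSt) with hdS | hdM
        · exact hMd.1 (Or.inr hdS)
        · exact hst (hMd.2 hdM ▸ hdSt)
      · exact hMd.1 (Or.inl (hda ▸ hOi))
      · exact hMd.1 (Or.inl (hdb ▸ hOj))
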